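/- The generic interaction rule i↓: S{t} ⟹ S[R,¬R] is derivable from atomic interaction ai↓ and switch s, by induction on the structure R. -/
import Mathlib


/-- Structures of system SKS. -/
inductive Str : Type
  | f : Str
  | t : Str
  | atom (n : ℕ) : Str
  | or (A B : Str) : Str
  | and (A B : Str) : Str
  | neg (A : Str) : Str

/-- Positive contexts: a structure with one hole, not under a negation. -/
inductive Ctx : Type
  | hole : Ctx
  | orl (S : Ctx) (T : Str) : Ctx
  | orr (T : Str) (S : Ctx) : Ctx
  | andl (S : Ctx) (T : Str) : Ctx
  | andr (T : Str) (S : Ctx) : Ctx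

def Ctx.fill : Ctx → Str → Str
  | .hole, R => R
  | .orl S T, R => .or (S.fill R) T
  | .orr T S, R => .or T (S.fill R)
  | .andl S T, R => .and (S.fill R) T
  | .andr T S, R => .and T (S.fill R)

/-- Structural equivalence `=` of SKS. -/
inductive equiv : Str → Str → Prop
  | refl (R) : equiv R R
  | symm {A B} : equiv A B → equiv B A
  | trans {A B C} : equiv A B → equiv B C → equiv A C
  | or_congr {A B C D} : equiv A B → equiv C D → equiv (.or A C) (.or B D)
  | and_congr {A B C D} : equiv A B → equiv C D → equiv (.and A C) (.and B D)
  | neg_congr {A B} : equiv A B → equiv (.neg A) (.neg B)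
  | or_assoc (A B C) : equiv (.or (.or A B) C) (.or A (.or B C))
  | or_comm (A B) : equiv (.or A B) (.or B A)
  | and_assoc (A B C) : equiv (.and (.and A B) C) (.and A (.and B C))
  | and_comm (A B) : equiv (.and A B) (.and B A)
  | dm_or (A B) : equiv (.neg (.or A B)) (.and (.neg A) (.neg B))
  | dm_and (A B) : equiv (.neg (.and A B)) (.or (.neg A) (.neg B))
  | neg_neg (A) : equiv (.neg (.neg A)) A
  | neg_f : equiv (.neg .f) .t
  | neg_t : equiv (.neg .t) .f
  | or_f (R) : equiv (.or .f R) R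
  | and_t (R) : equiv (.and .t R) R
  | or_t_t : equiv (.or .t .t) .t
  | and_f_f : equiv (.and .f .f) .f

/-- Steps using only atomic interaction and switch. -/
inductive stepI : Str → Str → Prop
  | ai_down (S : Ctx) (a : ℕ) :
      stepI (S.fill .t) (S.fill (.or (.atom a) (.neg (.atom a))))
  | s (S : Ctx) (R U T : Str) :
      stepI (S.fill (.and (.or R U) T)) (S.fill (.or (.and R T) U))

inductive derivI : Str → Str → Prop
  | refl (R) : derivI R R
  | step {A B C} : stepI A B → derivI B C → derivI A C
  | eq {A B C} : equiv A B → derivI B C → derivI A C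


def Ctx.comp : Ctx → Ctx → Ctx
  | .hole, T => T
  | .orl S U, T => .orl (S.comp T) U
  | .orr U S, T => .orr U (S.comp T)
  | .andl S U, T => .andl (S.comp T) U
  | .andr U S, T => .andr U (S.comp T)

theorem Ctx.fill_comp (S T : Ctx) (R : Str) :
    (S.comp T).fill R = S.fill (T.fill R) := by
  induction S <;> simp [Ctx.comp, Ctx.fill, *]

theorem equiv_fill (S : Ctx) {A B : Str} (h : equiv A B) :
    equiv (S.fill A) (S.fill B) := by
  induction S <;>
    simp only [Ctx.fill] <;>
    first
      | exact h
      | exact equiv.or_congr ‹_› (equiv.refl _)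
      | exact equiv.or_congr (equiv.refl _) ‹_›
      | exact equiv.and_congr ‹_› (equiv.refl _)
      | exact equiv.and_congr (equiv.refl _) ‹_›

theorem derivI.trans {A B C} (h1 : derivI A B) (h2 : derivI B C) : derivI A C := by
  induction h1 with
  | refl => exact h2
  | step s _ ih => exact .step s (ih h2)
  | eq e _ ih => exact .eq e (ih h2)

theorem derivI.eq' {A B C} (h : derivI A B) (e : equiv B C) : derivI A C :=
  h.trans (.eq e (.refl _))

/-- the generic interaction rule `i↓ : S{t} ⟹ S[R,¬R]`
is derivable from atomic interaction and switch. -/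
theorem generic_interaction_derivable (S : Ctx) (R : Str) :
    derivI (S.fill .t) (S.fill (.or R (.neg R))) := by
  induction R generalizing S with
  | f =>
      refine .eq (equiv.symm ?_) (.refl _)
      exact equiv_fill S ((equiv.or_f _).trans equiv.neg_f)
  | t =>
      refine .eq (equiv.symm ?_) (.refl _)
      exact equiv_fill S (((equiv.or_congr (.refl _) equiv.neg_t).trans
        (equiv.or_comm _ _)).trans (equiv.or_f _))
  | atom a => exact .step (.ai_down S a) (.refl _)
  | neg A ih =>
      refine (ih S).eq' (equiv_fill S (equiv.symm ?_))
      exact ((equiv.or_congr (.refl _) (equiv.neg_neg A)).trans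
        (equiv.or_comm _ _))
  | or A B ihA ihB =>
      refine (ihA S).trans ?_
      refine .eq (equiv_fill S (equiv.symm ((equiv.and_comm _ _).trans (equiv.and_t _)))) ?_
      have h2 := ihB (S.comp (.andr (.or A (.neg A)) .hole))
      rw [Ctx.fill_comp, Ctx.fill_comp] at h2
      simp only [Ctx.fill] at h2
      refine h2.trans ?_
      refine .eq (equiv_fill S (equiv.and_congr (equiv.or_comm _ _) (.refl _))) ?_
      refine .step (.s S (.neg A) A (.or B (.neg B))) ?_
      refine .eq (equiv_fill S (equiv.or_congr (equiv.and_comm _ _) (.refl _))) ?_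
      refine .eq (equiv_fill S (equiv.or_congr (equiv.and_congr (equiv.or_comm _ _) (.refl _)) (.refl _))) ?_
      have hs := stepI.s (S.comp (.orl .hole A)) (.neg B) B (.neg A)
      rw [Ctx.fill_comp, Ctx.fill_comp] at hs
      simp only [Ctx.fill] at hs
      refine .step hs ?_
      refine .eq (equiv_fill S ?_) (.refl _)
      refine (equiv.or_congr (equiv.or_congr ((equiv.and_comm _ _).trans (equiv.symm (equiv.dm_or A B))) (.refl _)) (.refl _)).trans ?_
      exact (equiv.or_assoc _ _ _).trans ((equiv.or_comm _ _).trans (equiv.or_congr (equiv.or_comm _ _) (.refl _)))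
  | and A B ihA ihB =>
      refine (ihB S).trans ?_
      refine .eq (equiv_fill S (equiv.or_congr (equiv.symm (equiv.and_t B)) (.refl _))) ?_
      have h2 := ihA (S.comp (.orl (.andl .hole B) (.neg B)))
      rw [Ctx.fill_comp, Ctx.fill_comp] at h2
      simp only [Ctx.fill] at h2
      refine h2.trans ?_
      have hs := stepI.s (S.comp (.orl .hole (.neg B))) A (.neg A) B
      rw [Ctx.fill_comp, Ctx.fill_comp] at hs
      simp only [Ctx.fill] at hs
      refine .step hs ?_
      refine .eq (equiv_fill S ?_) (.refl _)
      exact (equiv.or_assoc _ _ _).trans (equiv.or_congr (.refl _) (equiv.symm (equiv.dm_and A B)))
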